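/- Let t be an integer with t ≥ 3 and let G be a finite simple K_t-minor-free graph. Then for every nonempty set A ⊆ V(G) and every nonnegative integer r, |Π_{r,G}[V(G) → A]| ≤ (r+1)^{t−1}·|A|^{t−1}. -/

import Mathlib

open SimpleGraph

/-- `G` contains `H` as a minor: pairwise disjoint nonempty connected branch sets,
one for each vertex of `H`, with an edge of `G` between the branch sets of any
two adjacent vertices of `H`. -/
def SimpleGraph.HasMinor {V W : Type*} (G : SimpleGraph V) (H : SimpleGraph W) : Prop :=
  ∃ B : W → Set V,
    (∀ w, (B w).Nonempty) ∧
    (Pairwise fun w w' => Disjoint (B w) (B w')) ∧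
    (∀ w, (G.induce (B w)).Connected) ∧
    (∀ ⦃w w'⦄, H.Adj w w' → ∃ u ∈ B w, ∃ v ∈ B w', G.Adj u v)

/-- A graph is planar iff it has no `K₅` minor and no `K_{3,3}` minor (Wagner). -/
def SimpleGraph.Planar {V : Type*} (G : SimpleGraph V) : Prop :=
  ¬ G.HasMinor (⊤ : SimpleGraph (Fin 5)) ∧
  ¬ G.HasMinor (completeBipartiteGraph (Fin 3) (Fin 3))

/-- The profile of `u` on `A` at distance `r`: maps `a ∈ A` to `dist_G(u,a)` if this is
at most `r`, and to `∞` otherwise. -/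
noncomputable def SimpleGraph.profile {V : Type*} (G : SimpleGraph V) (r : ℕ) (A : Set V)
    (u : V) : A → ℕ∞ :=
  fun a => if G.edist u (a : V) ≤ r then G.edist u (a : V) else ⊤

/-- `Π_{r,G}[U → A]`: the set of distance-`r` profiles on `A` of vertices of `U`,
excluding the constant-`∞` profile. -/
noncomputable def SimpleGraph.profiles {V : Type*} (G : SimpleGraph V) (r : ℕ) (U A : Set V) :
    Set (A → ℕ∞) :=
  {f | ∃ u ∈ U, f = G.profile r A u} \ {fun _ => ⊤}

namespace ProfileAux

variable {V : Type*} (G : SimpleGraph V)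

/-- Sum of all radii. -/
def SS {t : ℕ} (Δ : Fin t → ℕ) : ℕ := ∑ j, Δ j

lemma delta_le_SS {t : ℕ} (Δ : Fin t → ℕ) (j : Fin t) : Δ j ≤ SS Δ :=
  Finset.single_le_sum (fun _ _ => Nat.zero_le _) (Finset.mem_univ j)

/-- Truncated distance to `a j`. -/
noncomputable def dd {t : ℕ} (a : Fin t → V) (Δ : Fin t → ℕ) (u : V) (j : Fin t) : ℕ :=
  (G.edist u (a j) ⊓ ((SS Δ + 1 : ℕ) : ℕ∞)).toNat

lemma dd_le_of_edist_le {t : ℕ} {a : Fin t → V} {Δ : Fin t → ℕ} {u : V} {j : Fin t} {k : ℕ}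
    (h : G.edist u (a j) ≤ (k : ℕ∞)) : dd G a Δ u j ≤ k :=
  ENat.toNat_le_of_le_coe (le_trans inf_le_left h)

lemma dd_eq {t : ℕ} {a : Fin t → V} {Δ : Fin t → ℕ} {u : V} {j : Fin t} {k : ℕ}
    (hk : k ≤ SS Δ) (h : G.edist u (a j) = (k : ℕ∞)) : dd G a Δ u j = k := by
  have h1 : (k : ℕ∞) ⊓ ((SS Δ + 1 : ℕ) : ℕ∞) = (k : ℕ∞) :=
    min_eq_left (by exact_mod_cast Nat.le_succ_of_le hk)
  rw [dd, h, h1, ENat.toNat_coe]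

lemma dd_big {t : ℕ} {a : Fin t → V} {Δ : Fin t → ℕ} {u : V} {j : Fin t} {k : ℕ}
    (hk : k ≤ SS Δ) (h : ¬ G.edist u (a j) ≤ (k : ℕ∞)) : k + 1 ≤ dd G a Δ u j := by
  have h1 : ((k + 1 : ℕ) : ℕ∞) ≤ G.edist u (a j) := by
    push_cast
    exact ENat.add_one_le_iff (by simp) |>.2 (not_le.1 h)
  have h2 : ((k + 1 : ℕ) : ℕ∞) ≤ G.edist u (a j) ⊓ ((SS Δ + 1 : ℕ) : ℕ∞) :=
    le_inf h1 (by exact_mod_cast Nat.succ_le_succ hk)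
  have h3 : G.edist u (a j) ⊓ ((SS Δ + 1 : ℕ) : ℕ∞) ≠ ⊤ :=
    ne_top_of_le_ne_top (ENat.coe_ne_top _) inf_le_right
  have h4 := ENat.toNat_le_toNat h2 h3
  rwa [ENat.toNat_coe] at h4

lemma dd_adj {t : ℕ} {a : Fin t → V} {Δ : Fin t → ℕ} {u w : V} {j : Fin t}
    (h : G.Adj u w) : dd G a Δ u j ≤ dd G a Δ w j + 1 := by
  have htri : G.edist u (a j) ≤ G.edist w (a j) + 1 := by
    calc G.edist u (a j) ≤ G.edist u w + G.edist w (a j) := SimpleGraph.edist_triangle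
    _ = G.edist w (a j) + 1 := by rw [edist_eq_one_iff_adj.2 h, add_comm]
  rcases le_or_gt ((SS Δ + 1 : ℕ) : ℕ∞) (G.edist w (a j)) with hM | hM
  · have h1 : dd G a Δ w j = SS Δ + 1 := by
      rw [dd, min_eq_right hM, ENat.toNat_coe]
    have h2 : dd G a Δ u j ≤ SS Δ + 1 := ENat.toNat_le_of_le_coe inf_le_right
    omega
  · have hne : G.edist w (a j) ≠ ⊤ := (hM.trans_le le_top).ne
    have hm : ((G.edist w (a j)).toNat : ℕ∞) = G.edist w (a j) := ENat.coe_toNat hne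
    set m := (G.edist w (a j)).toNat with hmdef
    have h1 : dd G a Δ w j = m := by
      rw [dd, min_eq_left (le_of_lt hM), hmdef]
    have h2 : G.edist u (a j) ⊓ ((SS Δ + 1 : ℕ) : ℕ∞) ≤ ((m + 1 : ℕ) : ℕ∞) := by
      refine le_trans inf_le_left (htri.trans ?_)
      rw [← hm]; push_cast; exact le_refl _
    have h3 : dd G a Δ u j ≤ m + 1 := by
      rw [dd]; exact ENat.toNat_le_of_le_coe h2
    omega

/-- The potential of vertex `u` w.r.t. index `j`. -/
noncomputable def pv {t : ℕ} (a : Fin t → V) (Δ : Fin t → ℕ) (u : V) (j : Fin t) : ℕ :=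
  t * (dd G a Δ u j + (SS Δ - Δ j)) + (j.val + 1)

lemma pv_inj {t : ℕ} {a : Fin t → V} {Δ : Fin t → ℕ} {u : V} {j k : Fin t}
    (h : pv G a Δ u j = pv G a Δ u k) : j = k := by
  have ht : 0 < t := j.pos
  have hmod : (j.val + 1) % t = (k.val + 1) % t := by
    have h1 := congrArg (· % t) h
    simpa [pv, Nat.mul_add_mod] using h1
  have hj := j.isLt
  have hk := k.isLt
  rcases Nat.lt_or_ge (j.val + 1) t with h1 | h1 <;> rcases Nat.lt_or_ge (k.val + 1) t with h2 | h2
  · rw [Nat.mod_eq_of_lt h1, Nat.mod_eq_of_lt h2] at hmod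
    exact Fin.ext (by omega)
  · have hk2 : k.val + 1 = t := by omega
    rw [Nat.mod_eq_of_lt h1, hk2, Nat.mod_self] at hmod; omega
  · have hj2 : j.val + 1 = t := by omega
    rw [Nat.mod_eq_of_lt h2, hj2, Nat.mod_self] at hmod; omega
  · exact Fin.ext (by omega)

/-- The index minimizing the potential. -/
noncomputable def phi {t : ℕ} [NeZero t] (a : Fin t → V) (Δ : Fin t → ℕ) (u : V) : Fin t :=
  (Finset.exists_min_image Finset.univ (pv G a Δ u) Finset.univ_nonempty).choose

lemma phi_min {t : ℕ} [NeZero t] (a : Fin t → V) (Δ : Fin t → ℕ) (u : V) (k : Fin t) :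
    pv G a Δ u (phi G a Δ u) ≤ pv G a Δ u k :=
  (Finset.exists_min_image Finset.univ (pv G a Δ u) Finset.univ_nonempty).choose_spec.2 k
    (Finset.mem_univ k)

lemma phi_eq {t : ℕ} [NeZero t] {a : Fin t → V} {Δ : Fin t → ℕ} {u : V} {j : Fin t}
    (h : ∀ k, k ≠ j → pv G a Δ u j < pv G a Δ u k) : phi G a Δ u = j := by
  by_contra hne
  exact absurd (phi_min G a Δ u j) (not_le.2 (h _ hne))

lemma phi_lt {t : ℕ} [NeZero t] {a : Fin t → V} {Δ : Fin t → ℕ} {u : V} {k : Fin t}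
    (h : k ≠ phi G a Δ u) : pv G a Δ u (phi G a Δ u) < pv G a Δ u k :=
  lt_of_le_of_ne (phi_min G a Δ u k) (fun he => h (pv_inj G he).symm)

/-- The branch sets. -/
noncomputable def branch {t : ℕ} [NeZero t] (a : Fin t → V) (Δ : Fin t → ℕ) (j : Fin t) :
    Set V :=
  {u | G.edist u (a j) ≤ (Δ j : ℕ∞) ∧ phi G a Δ u = j}

lemma pv_small {t : ℕ} {a : Fin t → V} {Δ : Fin t → ℕ} {u : V} {j : Fin t}
    (h : G.edist u (a j) ≤ (Δ j : ℕ∞)) : pv G a Δ u j ≤ t * SS Δ + t := by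
  have hdd : dd G a Δ u j ≤ Δ j := dd_le_of_edist_le G h
  have hΔ : Δ j ≤ SS Δ := delta_le_SS Δ j
  have h1 : dd G a Δ u j + (SS Δ - Δ j) ≤ SS Δ := by omega
  have h2 : t * (dd G a Δ u j + (SS Δ - Δ j)) ≤ t * SS Δ := Nat.mul_le_mul_left t h1
  have h3 := j.isLt
  rw [pv]; omega

lemma pv_big {t : ℕ} {a : Fin t → V} {Δ : Fin t → ℕ} {u : V} {j : Fin t}
    (h : ¬ G.edist u (a j) ≤ (Δ j : ℕ∞)) : t * SS Δ + t < pv G a Δ u j := by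
  have hΔ : Δ j ≤ SS Δ := delta_le_SS Δ j
  have hdd : Δ j + 1 ≤ dd G a Δ u j := dd_big G hΔ h
  have h1 : SS Δ + 1 ≤ dd G a Δ u j + (SS Δ - Δ j) := by omega
  have h2 : t * (SS Δ + 1) ≤ t * (dd G a Δ u j + (SS Δ - Δ j)) := Nat.mul_le_mul_left t h1
  have h3 : t * (SS Δ + 1) = t * SS Δ + t := by ring
  have h4 : 0 < t := j.pos
  rw [pv]; omega

lemma edist_le_of_pv_le {t : ℕ} {a : Fin t → V} {Δ : Fin t → ℕ} {u : V} {j : Fin t}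
    (h : pv G a Δ u j ≤ t * SS Δ + t) : G.edist u (a j) ≤ (Δ j : ℕ∞) := by
  by_contra hc
  exact absurd h (not_le.2 (pv_big G hc))

lemma pv_adj_le {t : ℕ} {a : Fin t → V} {Δ : Fin t → ℕ} {u w : V} (h : G.Adj u w) (k : Fin t) :
    pv G a Δ u k ≤ pv G a Δ w k + t := by
  have h1 : dd G a Δ u k ≤ dd G a Δ w k + 1 := dd_adj G h
  have h2 : dd G a Δ u k + (SS Δ - Δ k) ≤ dd G a Δ w k + 1 + (SS Δ - Δ k) := by omega
  have h3 := Nat.mul_le_mul_left t h2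
  have h4 : t * (dd G a Δ w k + 1 + (SS Δ - Δ k)) = t * (dd G a Δ w k + (SS Δ - Δ k)) + t := by
    ring
  rw [pv, pv]; omega


lemma geodesic_step {u v w : V} (hadj : G.Adj u v) (q : G.Walk v w)
    (hlen : ((q.length + 1 : ℕ) : ℕ∞) = G.edist u w) :
    ((q.length : ℕ) : ℕ∞) = G.edist v w := by
  have h1 : G.edist v w ≤ (q.length : ℕ∞) := SimpleGraph.edist_le q
  have h2 : G.edist u w ≤ G.edist v w + 1 := by
    calc G.edist u w ≤ G.edist u v + G.edist v w := SimpleGraph.edist_triangle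
    _ = G.edist v w + 1 := by rw [edist_eq_one_iff_adj.2 hadj, add_comm]
  have hne : G.edist v w ≠ ⊤ := ne_top_of_le_ne_top (ENat.coe_ne_top _) h1
  have hm : ((G.edist v w).toNat : ℕ∞) = G.edist v w := ENat.coe_toNat hne
  set m := (G.edist v w).toNat with hmdef
  rw [← hm] at h1 h2 ⊢
  rw [← hlen] at h2
  have hc1 : m ≤ q.length := by exact_mod_cast h1
  have hc2 : (((q.length + 1 : ℕ)) : ℕ∞) ≤ ((m + 1 : ℕ) : ℕ∞) := by push_cast; exact_mod_cast h2
  have hc3 : q.length + 1 ≤ m + 1 := by exact_mod_cast hc2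
  have : m = q.length := by omega
  rw [this]

lemma descent {t : ℕ} [NeZero t] {a : Fin t → V} {Δ : Fin t → ℕ} {j : Fin t} {u w : V}
    (p : G.Walk u w) :
    w = a j → ((p.length : ℕ) : ℕ∞) = G.edist u (a j) → p.length ≤ Δ j →
    phi G a Δ u = j → ∀ x ∈ p.support, x ∈ branch G a Δ j := by
  induction p with
  | nil =>
    rintro rfl hlen hΔ hphi x hx
    rw [SimpleGraph.Walk.support_nil] at hx
    rw [List.mem_singleton.1 hx]
    exact ⟨by rw [SimpleGraph.edist_self]; simp, hphi⟩
  | @cons u v w hadj q ih =>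
    rintro rfl hlen hΔ hphi x hx
    rw [SimpleGraph.Walk.length_cons] at hlen hΔ
    have hq : ((q.length : ℕ) : ℕ∞) = G.edist v (a j) :=
      geodesic_step G hadj q (by exact_mod_cast hlen)
    have hΔS : Δ j ≤ SS Δ := delta_le_SS Δ j
    have hdu : dd G a Δ u j = q.length + 1 := dd_eq G (by omega) (by exact_mod_cast hlen.symm)
    have hdv : dd G a Δ v j = q.length := dd_eq G (by omega) hq.symm
    have hphiv : phi G a Δ v = j := by
      apply phi_eq
      intro k hk
      have h1 : pv G a Δ u j = pv G a Δ v j + t := by rw [pv, pv, hdu, hdv]; ring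
      have h2 : pv G a Δ u k ≤ pv G a Δ v k + t := pv_adj_le G hadj k
      have h3 : pv G a Δ u j < pv G a Δ u k := by
        rw [← hphi] at hk ⊢; exact phi_lt G hk
      omega
    rw [SimpleGraph.Walk.support_cons] at hx
    rcases List.mem_cons.1 hx with rfl | hx'
    · refine ⟨?_, hphi⟩
      rw [← hlen]
      exact_mod_cast (by omega : q.length + 1 ≤ Δ j)
    · exact ih rfl hq (by omega) hphiv x hx'

lemma pairwalk {t : ℕ} [NeZero t] {a : Fin t → V} {Δ : Fin t → ℕ} {j k : Fin t} (hjk : j ≠ k)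
    (hak : phi G a Δ (a k) = k) {u w : V} (p : G.Walk u w) :
    w = a k → ((p.length : ℕ) : ℕ∞) = G.edist u (a k) → p.length ≤ Δ k →
    (∀ l, l ≠ j → l ≠ k → pv G a Δ u k < pv G a Δ u l) → phi G a Δ u = j →
    ∃ x ∈ branch G a Δ j, ∃ y ∈ branch G a Δ k, G.Adj x y := by
  induction p with
  | nil =>
    rintro rfl hlen hΔ hinv hphi
    exact absurd (hphi.symm.trans hak) hjk
  | @cons u v w hadj q ih =>
    rintro rfl hlen hΔ hinv hphi
    rw [SimpleGraph.Walk.length_cons] at hlen hΔ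
    have hq : ((q.length : ℕ) : ℕ∞) = G.edist v (a k) :=
      geodesic_step G hadj q (by exact_mod_cast hlen)
    have hΔS : Δ k ≤ SS Δ := delta_le_SS Δ k
    have hdu : dd G a Δ u k = q.length + 1 := dd_eq G (by omega) (by exact_mod_cast hlen.symm)
    have hdv : dd G a Δ v k = q.length := dd_eq G (by omega) hq.symm
    have hdrop : pv G a Δ u k = pv G a Δ v k + t := by rw [pv, pv, hdu, hdv]; ring
    have hinv' : ∀ l, l ≠ j → l ≠ k → pv G a Δ v k < pv G a Δ v l := by
      intro l h1 h2
      have h3 := hinv l h1 h2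
      have h4 : pv G a Δ u l ≤ pv G a Δ v l + t := pv_adj_le G hadj l
      omega
    by_cases hv : phi G a Δ v = k
    · have hvK : v ∈ branch G a Δ k := by
        refine ⟨?_, hv⟩
        rw [← hq]
        exact_mod_cast (by omega : q.length ≤ Δ k)
      have huJ : u ∈ branch G a Δ j := by
        refine ⟨edist_le_of_pv_le G ?_, hphi⟩
        have h1 : pv G a Δ u j ≤ pv G a Δ u k := by
          rw [← hphi]; exact phi_min G a Δ u k
        have h2 : pv G a Δ u k ≤ t * SS Δ + t := by
          refine pv_small G ?_
          rw [← hlen]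
          exact_mod_cast (by omega : q.length + 1 ≤ Δ k)
        omega
      exact ⟨u, huJ, v, hvK, hadj⟩
    · by_cases hvj : phi G a Δ v = j
      · exact ih rfl hq (by omega) hinv' hvj
      · exfalso
        have h5 := hinv' (phi G a Δ v) hvj hv
        have h6 := phi_min G a Δ v k
        omega

lemma reachable_induce {s : Set V} {u w : V} (p : G.Walk u w) :
    ∀ (_ : ∀ x ∈ p.support, x ∈ s) (hu : u ∈ s) (hw : w ∈ s),
      (G.induce s).Reachable ⟨u, hu⟩ ⟨w, hw⟩ := by
  induction p with
  | nil => intro _ hu hw; rfl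
  | @cons u v w hadj q ih =>
    intro hs hu hw
    have hv : v ∈ s := hs v (by simp)
    have h1 : (G.induce s).Adj ⟨u, hu⟩ ⟨v, hv⟩ := hadj
    exact h1.reachable.trans (ih (fun x hx => hs x (by simp [hx])) hv hw)

lemma connected_induce_of {s : Set V} {v : V} (hv : v ∈ s)
    (h : ∀ u, u ∈ s → ∃ p : G.Walk u v, ∀ x ∈ p.support, x ∈ s) :
    (G.induce s).Connected := by
  rw [SimpleGraph.connected_iff]
  refine ⟨?_, ⟨⟨v, hv⟩⟩⟩
  rintro ⟨x, hx⟩ ⟨y, hy⟩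
  obtain ⟨p, hp⟩ := h x hx
  obtain ⟨q, hq⟩ := h y hy
  exact (reachable_induce G p hp hx hv).trans (reachable_induce G q hq hy hv).symm

lemma singleton_witness {t : ℕ} [NeZero t] {a : Fin t → V} {Δ : Fin t → ℕ} {j : Fin t} {v : V}
    (h1 : G.edist v (a j) ≤ (Δ j : ℕ∞)) (h2 : ∀ k, k ≠ j → ¬ G.edist v (a k) ≤ (Δ k : ℕ∞)) :
    v ∈ branch G a Δ j ∧ a j ∈ branch G a Δ j := by
  have hphi : phi G a Δ v = j :=
    phi_eq G (fun k hk => lt_of_le_of_lt (pv_small G h1) (pv_big G (h2 k hk)))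
  refine ⟨⟨h1, hphi⟩, ?_⟩
  have hne : G.edist v (a j) ≠ ⊤ := ne_top_of_le_ne_top (ENat.coe_ne_top _) h1
  obtain ⟨p, hp⟩ := SimpleGraph.exists_walk_of_edist_ne_top hne
  have hplen : p.length ≤ Δ j := by
    have : (p.length : ℕ∞) ≤ (Δ j : ℕ∞) := by rw [hp]; exact h1
    exact_mod_cast this
  exact descent G p rfl (by exact_mod_cast hp) hplen hphi (a j) p.end_mem_support

theorem minor_of_witnesses {t : ℕ} [NeZero t] (a : Fin t → V) (Δ : Fin t → ℕ)
    (hs : ∀ j, ∃ v, G.edist v (a j) ≤ (Δ j : ℕ∞) ∧ ∀ k, k ≠ j → ¬ G.edist v (a k) ≤ (Δ k : ℕ∞))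
    (hp : ∀ j k, j ≠ k → ∃ w, G.edist w (a j) ≤ (Δ j : ℕ∞) ∧ G.edist w (a k) ≤ (Δ k : ℕ∞) ∧
      ∀ l, l ≠ j → l ≠ k → ¬ G.edist w (a l) ≤ (Δ l : ℕ∞)) :
    G.HasMinor (⊤ : SimpleGraph (Fin t)) := by
  have haj : ∀ j, a j ∈ branch G a Δ j := fun j => by
    obtain ⟨v, h1, h2⟩ := hs j
    exact (singleton_witness G h1 h2).2
  refine ⟨branch G a Δ, fun j => ⟨a j, haj j⟩, ?_, ?_, ?_⟩
  · intro j k hjk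
    rw [Set.disjoint_left]
    rintro u ⟨-, h1⟩ ⟨-, h2⟩
    exact hjk (h1.symm.trans h2)
  · intro j
    apply connected_induce_of G (haj j)
    intro u hu
    have hne : G.edist u (a j) ≠ ⊤ := ne_top_of_le_ne_top (ENat.coe_ne_top _) hu.1
    obtain ⟨p, hp'⟩ := SimpleGraph.exists_walk_of_edist_ne_top hne
    have hplen : p.length ≤ Δ j := by
      have : (p.length : ℕ∞) ≤ (Δ j : ℕ∞) := by rw [hp']; exact hu.1
      exact_mod_cast this
    exact ⟨p, descent G p rfl (by exact_mod_cast hp') hplen hu.2⟩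
  · intro j k hadj
    have hjk : j ≠ k := hadj.ne
    obtain ⟨w, h1, h2, h3⟩ := hp j k hjk
    by_cases hw : phi G a Δ w = j
    · have hne : G.edist w (a k) ≠ ⊤ := ne_top_of_le_ne_top (ENat.coe_ne_top _) h2
      obtain ⟨p, hp'⟩ := SimpleGraph.exists_walk_of_edist_ne_top hne
      have hplen : p.length ≤ Δ k := by
        have : (p.length : ℕ∞) ≤ (Δ k : ℕ∞) := by rw [hp']; exact h2
        exact_mod_cast this
      exact pairwalk G hjk (haj k).2 p rfl (by exact_mod_cast hp') hplen
        (fun l hl1 hl2 => lt_of_le_of_lt (pv_small G h2) (pv_big G (h3 l hl1 hl2))) hw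
    · by_cases hw2 : phi G a Δ w = k
      · have hne : G.edist w (a j) ≠ ⊤ := ne_top_of_le_ne_top (ENat.coe_ne_top _) h1
        obtain ⟨p, hp'⟩ := SimpleGraph.exists_walk_of_edist_ne_top hne
        have hplen : p.length ≤ Δ j := by
          have : (p.length : ℕ∞) ≤ (Δ j : ℕ∞) := by rw [hp']; exact h1
          exact_mod_cast this
        obtain ⟨x, hx, y, hy, hxy⟩ := pairwalk G hjk.symm (haj j).2 p rfl
          (by exact_mod_cast hp') hplen
          (fun l hl1 hl2 => lt_of_le_of_lt (pv_small G h1) (pv_big G (h3 l hl2 hl1))) hw2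
        exact ⟨y, hy, x, hx, hxy.symm⟩
      · exfalso
        have h5 := phi_min G a Δ w j
        have h6 := pv_small G h1
        have h7 := pv_big G (h3 _ hw hw2)
        omega


lemma sum_choose_sub_one_le {n d : ℕ} (hn : 1 ≤ n) (hd : 1 ≤ d) :
    (∑ k ∈ Finset.Iic d, n.choose k) - 1 ≤ n ^ d := by
  have key : ∀ m, 1 ≤ m → (∑ k ∈ Finset.Icc 1 m, n.choose k) ≤ n ^ m := by
    intro m hm
    induction m with
    | zero => omega
    | succ m ihm =>
      rcases Nat.eq_or_lt_of_le hm with h | h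
      · have hm0 : m = 0 := by omega
        subst hm0
        simp [Nat.choose_one_right]
      · have hm1 : 1 ≤ m := by omega
        have ih := ihm hm1
        rw [Finset.sum_Icc_succ_top (by omega : 1 ≤ m + 1)]
        have hC : n.choose m ≤ n ^ m := Nat.choose_le_pow n m
        have h1 : n.choose (m+1) * (m+1) = n.choose m * (n - m) := Nat.choose_succ_right_eq n m
        have h2 : n.choose (m+1) * 2 ≤ n.choose (m+1) * (m+1) :=
          Nat.mul_le_mul_left _ (by omega)
        have h3 : n.choose m * (n - m) ≤ n ^ m * n :=
          Nat.mul_le_mul hC (Nat.sub_le n m)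
        have hps : n ^ (m+1) = n ^ m * n := pow_succ n m
        rcases Nat.lt_or_ge n 2 with hn2 | hn2
        · have hn1' : n = 1 := by omega
          subst hn1'
          have hC0 : Nat.choose 1 (m+1) = 0 := Nat.choose_eq_zero_of_lt (by omega)
          simp [hC0] at *
          omega
        · have h4 : n ^ m * 2 ≤ n ^ m * n := Nat.mul_le_mul_left _ hn2
          omega
  have hIic : Finset.Iic d = insert 0 (Finset.Icc 1 d) := by
    ext x
    simp only [Finset.mem_Iic, Finset.mem_insert, Finset.mem_Icc]
    omega
  rw [hIic, Finset.sum_insert (by simp)]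
  have := key d hd
  simp only [Nat.choose_zero_right]
  omega

end ProfileAux

/-- If `t ≥ 3` and `G` is a finite simple `K_t`-minor-free graph, then for every nonempty
`A ⊆ V(G)` and every `r : ℕ`, `|Π_{r,G}[V(G) → A]| ≤ (r+1)^{t-1}·|A|^{t-1}`. -/
theorem profiles_Kt_minor_free_poly_in_A (t : ℕ) (ht : 3 ≤ t)
    (V : Type) [Fintype V] (G : SimpleGraph V)
    (hG : ¬ G.HasMinor (⊤ : SimpleGraph (Fin t))) (A : Set V) (hA : A.Nonempty) (r : ℕ) :
    (G.profiles r Set.univ A).ncard ≤ (r + 1) ^ (t - 1) * A.ncard ^ (t - 1) := by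
  classical
  haveI : NeZero t := ⟨by omega⟩
  set n := Fintype.card (↥A × Fin (r+1)) with hn
  let F : (A → ℕ∞) → Finset (↥A × Fin (r+1)) :=
    fun f => Finset.univ.filter fun x => f x.1 ≤ ((x.2 : ℕ) : ℕ∞)
  let Su : V → Finset (↥A × Fin (r+1)) := fun u => F (G.profile r A u)
  have hmemSu : ∀ (u : V) (x : ↥A × Fin (r+1)),
      x ∈ Su u ↔ G.edist u ↑x.1 ≤ ((x.2 : ℕ) : ℕ∞) := by
    intro u x
    simp only [Su, F, Finset.mem_filter, Finset.mem_univ, true_and]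
    simp only [SimpleGraph.profile]
    constructor
    · intro h
      by_cases hc : G.edist u ↑x.1 ≤ (r : ℕ∞)
      · rwa [if_pos hc] at h
      · rw [if_neg hc] at h
        exact absurd h (by simp)
    · intro h
      have hxr : ((x.2 : ℕ) : ℕ∞) ≤ (r : ℕ∞) := by
        exact_mod_cast Nat.lt_succ_iff.1 x.2.isLt
      have hc : G.edist u ↑x.1 ≤ (r : ℕ∞) := h.trans hxr
      rwa [if_pos hc]
  set 𝒜 : Finset (Finset (↥A × Fin (r+1))) := insert ∅ (Finset.univ.image Su) with h𝒜
  have hvc : 𝒜.vcDim ≤ t - 1 := by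
    by_contra hlt
    push_neg at hlt
    rw [Finset.vcDim] at hlt
    obtain ⟨s, hs, hcard⟩ := Finset.lt_sup_iff.1 hlt
    rw [Finset.mem_shatterer] at hs
    obtain ⟨s', hs'sub, hs'card⟩ := Finset.exists_subset_card_eq (show t ≤ s.card by omega)
    have hshat : 𝒜.Shatters s' := hs.mono_right hs'sub
    let e : Fin t ≃ ↥s' := (Finset.equivFinOfCardEq hs'card).symm
    let a : Fin t → V := fun j => ↑((↑(e j) : ↥A × Fin (r+1)).1)
    let Δ : Fin t → ℕ := fun j => ((↑(e j) : ↥A × Fin (r+1)).2 : ℕ)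
    have hexy : ∀ (j : Fin t), (↑(e j) : ↥A × Fin (r+1)) ∈ s' := fun j => (e j).2
    have hecoord : ∀ j k : Fin t, (↑(e j) : ↥A × Fin (r+1)) = ↑(e k) → j = k := by
      intro j k h
      exact e.injective (Subtype.ext h)
    have hSu_of : ∀ B ∈ 𝒜, B ≠ ∅ → ∃ u, B = Su u := by
      intro B hB hne
      rcases Finset.mem_insert.1 hB with rfl | hB
      · exact absurd rfl hne
      · obtain ⟨u, -, rfl⟩ := Finset.mem_image.1 hB; exact ⟨u, rfl⟩
    have hedistSu : ∀ (v : V) (j : Fin t),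
        ((↑(e j) : ↥A × Fin (r+1)) ∈ Su v ↔ G.edist v (a j) ≤ (Δ j : ℕ∞)) := by
      intro v j
      exact hmemSu v _
    have hsing : ∀ j : Fin t, ∃ v, G.edist v (a j) ≤ (Δ j : ℕ∞) ∧
        ∀ k, k ≠ j → ¬ G.edist v (a k) ≤ (Δ k : ℕ∞) := by
      intro j
      obtain ⟨B, hB, hBeq⟩ := hshat (Finset.singleton_subset_iff.2 (hexy j))
      have hBne : B ≠ ∅ := by
        rintro rfl
        rw [Finset.inter_empty] at hBeq
        exact (Finset.singleton_ne_empty _) hBeq.symm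
      obtain ⟨v, rfl⟩ := hSu_of B hB hBne
      refine ⟨v, ?_, ?_⟩
      · have hx : (↑(e j) : ↥A × Fin (r+1)) ∈ s' ∩ Su v := by
          rw [hBeq]; exact Finset.mem_singleton_self _
        exact (hedistSu v j).1 (Finset.mem_inter.1 hx).2
      · intro k hk hc
        have hx : (↑(e k) : ↥A × Fin (r+1)) ∈ s' ∩ Su v :=
          Finset.mem_inter.2 ⟨hexy k, (hedistSu v k).2 hc⟩
        rw [hBeq] at hx
        exact hk (hecoord k j (Finset.mem_singleton.1 hx))
    have hpair : ∀ j k : Fin t, j ≠ k → ∃ w, G.edist w (a j) ≤ (Δ j : ℕ∞) ∧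
        G.edist w (a k) ≤ (Δ k : ℕ∞) ∧
        ∀ l, l ≠ j → l ≠ k → ¬ G.edist w (a l) ≤ (Δ l : ℕ∞) := by
      intro j k hjk
      have hsub2 : ({(↑(e j) : ↥A × Fin (r+1)), ↑(e k)} : Finset _) ⊆ s' := by
        intro x hx
        rcases Finset.mem_insert.1 hx with rfl | hx
        · exact hexy j
        · rw [Finset.mem_singleton.1 hx]; exact hexy k
      obtain ⟨B, hB, hBeq⟩ := hshat hsub2
      have hBne : B ≠ ∅ := by
        rintro rfl
        rw [Finset.inter_empty] at hBeq
        exact (Finset.insert_ne_empty _ _) hBeq.symm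
      obtain ⟨v, rfl⟩ := hSu_of B hB hBne
      have hxj : (↑(e j) : ↥A × Fin (r+1)) ∈ s' ∩ Su v := by
        rw [hBeq]; exact Finset.mem_insert_self _ _
      have hxk : (↑(e k) : ↥A × Fin (r+1)) ∈ s' ∩ Su v := by
        rw [hBeq]; exact Finset.mem_insert_of_mem (Finset.mem_singleton_self _)
      refine ⟨v, (hedistSu v j).1 (Finset.mem_inter.1 hxj).2,
        (hedistSu v k).1 (Finset.mem_inter.1 hxk).2, ?_⟩
      intro l hl1 hl2 hc
      have hx : (↑(e l) : ↥A × Fin (r+1)) ∈ s' ∩ Su v :=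
        Finset.mem_inter.2 ⟨hexy l, (hedistSu v l).2 hc⟩
      rw [hBeq] at hx
      rcases Finset.mem_insert.1 hx with h | h
      · exact hl1 (hecoord l j h)
      · exact hl2 (hecoord l k (Finset.mem_singleton.1 h))
    exact hG (ProfileAux.minor_of_witnesses G a Δ hsing hpair)
  have hA1 : 𝒜.card ≤ ∑ k ∈ Finset.Iic (t-1), n.choose k := by
    calc 𝒜.card ≤ 𝒜.shatterer.card := Finset.card_le_card_shatterer 𝒜
    _ ≤ ∑ k ∈ Finset.Iic 𝒜.vcDim, n.choose k := Finset.card_shatterer_le_sum_vcDim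
    _ ≤ _ := Finset.sum_le_sum_of_subset (Finset.Iic_subset_Iic.2 hvc)
  have hinj : Set.InjOn F (G.profiles r Set.univ A) := by
    rintro f hf g hg hFeq
    obtain ⟨⟨u, -, rfl⟩, -⟩ := hf
    obtain ⟨⟨v, -, rfl⟩, -⟩ := hg
    have key : ∀ (x : ↥A) (i : Fin (r+1)),
        (G.edist u ↑x ≤ ((i : ℕ) : ℕ∞) ↔ G.edist v ↑x ≤ ((i : ℕ) : ℕ∞)) := by
      intro x i
      have h1 : (x, i) ∈ Su u ↔ (x, i) ∈ Su v := by
        show (x, i) ∈ F (G.profile r A u) ↔ (x, i) ∈ F (G.profile r A v)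
        rw [hFeq]
      exact ((hmemSu u (x, i)).symm.trans h1).trans (hmemSu v (x, i))
    funext x
    show G.profile r A u x = G.profile r A v x
    by_cases hu : G.edist u ↑x ≤ (r : ℕ∞)
    · have hne : G.edist u ↑x ≠ ⊤ := ne_top_of_le_ne_top (ENat.coe_ne_top _) hu
      have hm1 : (((G.edist u ↑x).toNat : ℕ) : ℕ∞) = G.edist u ↑x := ENat.coe_toNat hne
      have hmr : (G.edist u ↑x).toNat < r + 1 :=
        Nat.lt_succ_of_le (ENat.toNat_le_of_le_coe hu)
      have h2 : G.edist v ↑x ≤ (((G.edist u ↑x).toNat : ℕ) : ℕ∞) :=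
        (key x ⟨_, hmr⟩).1 (le_of_eq hm1.symm)
      have hv : G.edist v ↑x ≤ (r : ℕ∞) :=
        h2.trans (by exact_mod_cast Nat.lt_succ_iff.1 hmr)
      have hne' : G.edist v ↑x ≠ ⊤ := ne_top_of_le_ne_top (ENat.coe_ne_top _) hv
      have hm1' : (((G.edist v ↑x).toNat : ℕ) : ℕ∞) = G.edist v ↑x := ENat.coe_toNat hne'
      have hmr' : (G.edist v ↑x).toNat < r + 1 :=
        Nat.lt_succ_of_le (ENat.toNat_le_of_le_coe hv)
      have h3 : G.edist u ↑x ≤ (((G.edist v ↑x).toNat : ℕ) : ℕ∞) :=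
        (key x ⟨_, hmr'⟩).2 (le_of_eq hm1'.symm)
      have heq : G.edist u ↑x = G.edist v ↑x :=
        le_antisymm (h3.trans_eq hm1') (h2.trans_eq hm1)
      simp only [SimpleGraph.profile, if_pos hu, if_pos hv, heq]
    · by_cases hv : G.edist v ↑x ≤ (r : ℕ∞)
      · exfalso
        have hne' : G.edist v ↑x ≠ ⊤ := ne_top_of_le_ne_top (ENat.coe_ne_top _) hv
        have hm1' : (((G.edist v ↑x).toNat : ℕ) : ℕ∞) = G.edist v ↑x := ENat.coe_toNat hne'
        have hmr' : (G.edist v ↑x).toNat < r + 1 :=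
          Nat.lt_succ_of_le (ENat.toNat_le_of_le_coe hv)
        have h3 : G.edist u ↑x ≤ (((G.edist v ↑x).toNat : ℕ) : ℕ∞) :=
          (key x ⟨_, hmr'⟩).2 (le_of_eq hm1'.symm)
        exact hu (h3.trans (by exact_mod_cast Nat.lt_succ_iff.1 hmr'))
      · simp only [SimpleGraph.profile, if_neg hu, if_neg hv]
  have hne0 : ∀ f ∈ G.profiles r Set.univ A, F f ≠ ∅ := by
    rintro f ⟨⟨u, -, rfl⟩, hnottop⟩ h0
    apply hnottop
    simp only [Set.mem_singleton_iff]
    funext x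
    show G.profile r A u x = ⊤
    rw [SimpleGraph.profile]
    split_ifs with hc
    · exfalso
      have hxmem : (x, Fin.last r) ∈ Su u := by
        rw [hmemSu u (x, Fin.last r)]
        simpa using hc
      rw [show Su u = F (G.profile r A u) from rfl, h0] at hxmem
      exact absurd hxmem (Finset.notMem_empty _)
    · rfl
  have hsub : F '' (G.profiles r Set.univ A) ⊆ ↑(𝒜.erase ∅) := by
    rintro B ⟨f, hf, rfl⟩
    refine Finset.mem_coe.2 (Finset.mem_erase.2 ⟨hne0 f hf, ?_⟩)
    obtain ⟨⟨u, -, rfl⟩, -⟩ := hf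
    exact Finset.mem_insert_of_mem (Finset.mem_image_of_mem Su (Finset.mem_univ u))
  have hcount : (G.profiles r Set.univ A).ncard ≤ 𝒜.card - 1 := by
    have h1 : (G.profiles r Set.univ A).ncard = (F '' (G.profiles r Set.univ A)).ncard :=
      (Set.ncard_image_of_injOn hinj).symm
    have h2 : (F '' (G.profiles r Set.univ A)).ncard ≤ ((𝒜.erase ∅ : Finset _) : Set _).ncard :=
      Set.ncard_le_ncard hsub (Finset.finite_toSet _)
    rw [Set.ncard_coe_finset] at h2
    have h3 : (𝒜.erase ∅).card = 𝒜.card - 1 :=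
      Finset.card_erase_of_mem (Finset.mem_insert_self _ _)
    omega
  have hAncard : A.ncard = Fintype.card ↥A := by
    rw [← Nat.card_coe_set_eq, Nat.card_eq_fintype_card]
  have hn_eq : n = A.ncard * (r+1) := by
    rw [hn, Fintype.card_prod, Fintype.card_fin, hAncard]
  have hApos : 0 < A.ncard := by
    rw [hAncard]
    exact Fintype.card_pos_iff.2 hA.to_subtype
  have hn1 : 1 ≤ n := by
    rw [hn_eq]
    exact Nat.mul_pos hApos (Nat.succ_pos r)
  have hfin : (G.profiles r Set.univ A).ncard ≤ n ^ (t-1) := by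
    have hnum := ProfileAux.sum_choose_sub_one_le hn1 (show 1 ≤ t-1 by omega)
    omega
  rw [hn_eq, mul_pow, mul_comm] at hfin
  exact hfin
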